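/- Let Z be the 3×3 quaternion skew-symmetric matrix with Z₁₂ = 1, Z₁₃ = c, Z₂₃ = b, Z₂₁ = -1, Z₃₁ = -c, Z₃₂ = -b, and zero diagonal, where b̄·c̄ ≠ c̄·b̄. Then W = Z·Z* is positive definite: for every nonzero quaternion vector x ∈ ℍ³, x* W x > 0. -/

import Mathlib

set_option maxHeartbeats 800000

open scoped Quaternion

/-- For `Z = !![0, 1, c; -1, 0, b; -c, -b, 0]` with `b̄·c̄ ≠ c̄·b̄`, the matrix
`W = Z·Z*` is positive definite: `x* W x > 0` for all nonzero `x`. -/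
theorem three_by_three_skewSymm_mul_conjTranspose_posDef (b c : ℍ[ℝ])
    (h : star b * star c ≠ star c * star b) :
    ∀ x : Fin 3 → ℍ[ℝ], x ≠ 0 → ∃ r : ℝ, 0 < r ∧
      dotProduct (star x)
        (((!![0, 1, c; -1, 0, b; -c, -b, 0] : Matrix (Fin 3) (Fin 3) ℍ[ℝ]) *
          (!![0, 1, c; -1, 0, b; -c, -b, 0]).conjTranspose).mulVec x) = (r : ℍ[ℝ]) := by
  intro x hx
  set Z : Matrix (Fin 3) (Fin 3) ℍ[ℝ] := !![0, 1, c; -1, 0, b; -c, -b, 0] with hZ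
  set yv : Fin 3 → ℍ[ℝ] := Z.conjTranspose.mulVec x with hyv
  have e0 : yv 0 = -(x 1) - star c * x 2 := by
    simp [hyv, hZ, Matrix.mulVec, dotProduct, Fin.sum_univ_three,
      Matrix.conjTranspose_apply]
    noncomm_ring
  have e1 : yv 1 = x 0 - star b * x 2 := by
    simp [hyv, hZ, Matrix.mulVec, dotProduct, Fin.sum_univ_three,
      Matrix.conjTranspose_apply]
    noncomm_ring
  have e2 : yv 2 = star c * x 0 + star b * x 1 := by
    simp [hyv, hZ, Matrix.mulVec, dotProduct, Fin.sum_univ_three,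
      Matrix.conjTranspose_apply]
  have key : dotProduct (star x) ((Z * Z.conjTranspose).mulVec x)
      = star (yv 0) * yv 0 + star (yv 1) * yv 1 + star (yv 2) * yv 2 := by
    rw [← Matrix.mulVec_mulVec, Matrix.dotProduct_mulVec, ← hyv]
    have : Matrix.vecMul (star x) Z = star yv := by
      rw [hyv, Matrix.star_mulVec, Matrix.conjTranspose_conjTranspose]
    rw [this]
    simp [dotProduct, Fin.sum_univ_three]
  refine ⟨Quaternion.normSq (yv 0) + Quaternion.normSq (yv 1) + Quaternion.normSq (yv 2),
    ?_, ?_⟩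
  · have hne : ¬ (yv 0 = 0 ∧ yv 1 = 0 ∧ yv 2 = 0) := by
      rintro ⟨h0, h1, h2⟩
      rw [e0] at h0; rw [e1] at h1; rw [e2] at h2
      have hx2 : x 2 = 0 := by
        have hx1 : x 1 = -(star c * x 2) := by linear_combination (norm := noncomm_ring) -h0
        have hx0 : x 0 = star b * x 2 := by linear_combination (norm := noncomm_ring) h1
        have key2 : (star c * star b - star b * star c) * x 2 = 0 := by
          rw [hx0, hx1] at h2
          linear_combination (norm := noncomm_ring) h2
        rcases mul_eq_zero.mp key2 with h' | h'
        · exact absurd (sub_eq_zero.mp h').symm h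
        · exact h'
      have hx1 : x 1 = 0 := by rw [hx2] at h0; simpa using h0
      have hx0 : x 0 = 0 := by rw [hx2] at h1; simpa using h1
      apply hx
      funext i
      fin_cases i <;> simpa [hx0, hx1, hx2]
    have hnn : ∀ q : ℍ[ℝ], 0 ≤ Quaternion.normSq q := fun q => Quaternion.normSq_nonneg
    by_contra hr
    push_neg at hr
    have h0 : Quaternion.normSq (yv 0) = 0 := by
      nlinarith [hnn (yv 0), hnn (yv 1), hnn (yv 2)]
    have h1 : Quaternion.normSq (yv 1) = 0 := by
      nlinarith [hnn (yv 0), hnn (yv 1), hnn (yv 2)]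
    have h2 : Quaternion.normSq (yv 2) = 0 := by
      nlinarith [hnn (yv 0), hnn (yv 1), hnn (yv 2)]
    exact hne ⟨Quaternion.normSq_eq_zero.mp h0, Quaternion.normSq_eq_zero.mp h1,
      Quaternion.normSq_eq_zero.mp h2⟩
  · rw [key]
    push_cast
    rw [← Quaternion.star_mul_self, ← Quaternion.star_mul_self, ← Quaternion.star_mul_self]
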